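/- Let k ≥ 2, define F : ℂ³ → ℂ by F(x,y,z) = conj(x)·y·(x + z^k), and let y₀ ∈ ℝ with y₀ ≠ 0. Then there exist a sequence of points pₙ → (0, y₀, 0) with F(pₙ) ≠ 0 and fderiv ℝ F pₙ surjective, and unit vectors wₙ ∈ ℂ³ orthogonal (with respect to the real inner product) to ker(fderiv ℝ F pₙ), such that wₙ → (0, i, 0). Since (0, i, 0) is a real tangent vector to the singular line {x = z = 0} of F at (0, y₀, 0), the corresponding limit of tangent spaces to the fibres of F does not contain the tangent space of the y-axis; consequently F is not Thom regular along the y-axis. (Computation of Section 5.1 showing that F has a Milnor tube fibration but no Thom regularity; one may take pₙ = (xₙ, y₀, 0) with xₙ → 0, xₙ ≠ 0, and wₙ the normalization of the normal vector n_i(pₙ) = (0, i·|xₙ|², 0).) -/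

import Mathlib

open Complex Filter Function Metric

noncomputable section

abbrev C3 := EuclideanSpace ℂ (Fin 3)

def mk3 (a b c : ℂ) : C3 := WithLp.toLp 2 ![a, b, c]

def realInnerC (v w : C3) : ℝ := (∑ k : Fin 3, v k * (starRingEnd ℂ) (w k)).re

@[simp] lemma proj_app (i : Fin 3) (u : C3) :
    ((EuclideanSpace.proj i : C3 →L[ℂ] ℂ).restrictScalars ℝ) u = u i := rfl

@[simp] lemma mk3_zero (a b c : ℂ) : mk3 a b c 0 = a := rfl
@[simp] lemma mk3_one (a b c : ℂ) : mk3 a b c 1 = b := rfl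
@[simp] lemma mk3_two (a b c : ℂ) : mk3 a b c 2 = c := rfl

lemma key (k : ℕ) (hk : 2 ≤ k) (F : C3 → ℂ)
    (hF : ∀ q : C3, F q = starRingEnd ℂ (q 0) * (q 1 * (q 0 + (q 2) ^ k)))
    (t y₀ : ℝ) (u : C3) :
    fderiv ℝ F (mk3 (t:ℂ) (y₀:ℂ) 0) u
      = ((t*y₀ : ℝ) : ℂ) * (starRingEnd ℂ) (u 0) + ((t:ℝ):ℂ)^2 * u 1
        + ((t*y₀:ℝ):ℂ) * u 0 := by
  have hFe : F = fun q : C3 => starRingEnd ℂ (q 0) * (q 1 * (q 0 + (q 2) ^ k)) :=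
    funext hF
  subst hFe
  set p : C3 := mk3 (t:ℂ) (y₀:ℂ) 0 with hp
  set π : Fin 3 → (C3 →L[ℝ] ℂ) :=
    fun i => (EuclideanSpace.proj i : C3 →L[ℂ] ℂ).restrictScalars ℝ with hπ
  have hproj : ∀ i, HasFDerivAt (fun q : C3 => q i) (π i) p := fun i =>
    ((EuclideanSpace.proj i : C3 →L[ℂ] ℂ).restrictScalars ℝ).hasFDerivAt
  have hconj : HasFDerivAt (fun q : C3 => (starRingEnd ℂ) (q 0))
      (Complex.conjCLE.toContinuousLinearMap.comp (π 0)) p :=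
    (Complex.conjCLE.toContinuousLinearMap.hasFDerivAt).comp p (hproj 0)
  have hpow : HasFDerivAt (fun q : C3 => (q 2) ^ k)
      (((ContinuousLinearMap.toSpanSingleton ℂ ((k:ℂ) * (0:ℂ) ^ (k - 1))).restrictScalars ℝ).comp (π 2))
      p :=
    (((hasDerivAt_pow k (0:ℂ)).hasFDerivAt).restrictScalars ℝ).comp p (hproj 2)
  have hinner := (hproj 0).add hpow
  have hmul1 := (hproj 1).mul hinner
  have hfull := hconj.mul hmul1
  rw [HasFDerivAt.fderiv (f := fun q : C3 => starRingEnd ℂ (q 0) * (q 1 * (q 0 + (q 2) ^ k))) hfull]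
  have h2 : p 2 = 0 := rfl
  have h0 : p 0 = (t : ℂ) := rfl
  have h1 : p 1 = (y₀ : ℂ) := rfl
  have hk1 : k - 1 ≠ 0 := by omega
  have hk0 : k ≠ 0 := by omega
  simp only [h0, h1, h2, zero_pow hk1, zero_pow hk0, mul_zero, zero_smul, add_zero,
    ContinuousLinearMap.add_apply, ContinuousLinearMap.smul_apply, smul_zero,
    ContinuousLinearMap.comp_apply, ContinuousLinearEquiv.coe_coe, Complex.conjCLE_apply,
    ContinuousLinearMap.coe_restrictScalars', proj_app, smul_eq_mul,
    ContinuousLinearMap.smulRight_apply, ContinuousLinearMap.one_apply,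
    ContinuousLinearMap.toSpanSingleton_apply, Pi.add_apply, Pi.mul_apply]
  simp only [hπ, proj_app, Complex.ofReal_mul, Complex.conj_ofReal]
  ring

/-- **Computation of Section 5.1** (failure of Thom regularity).  For `k ≥ 2` and
`F(x,y,z) = conj(x)·y·(x + z^k)`, at any point `(0, y₀, 0)`, `y₀ ∈ ℝ \ {0}`, of the
singular line `{x = z = 0}` there is a sequence of regular points `pₘ → (0, y₀, 0)` with
`F(pₘ) ≠ 0`, together with unit normal vectors `wₘ` to the fibres of `F` at `pₘ`
(orthogonal, for the real inner product, to `ker (fderiv ℝ F pₘ)`), such that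
`wₘ → (0, i, 0)` — a vector tangent to the `y`-axis, so that the limit of tangent spaces
to the fibres of `F` does not contain the tangent space of the `y`-axis and `F` is not
Thom regular along it. -/
theorem xbar_y_x_plus_zk_not_Thom_regular
    (k : ℕ) (hk : 2 ≤ k)
    (F : C3 → ℂ) (hF : ∀ q : C3, F q = starRingEnd ℂ (q 0) * (q 1 * (q 0 + (q 2) ^ k)))
    (y₀ : ℝ) (hy₀ : y₀ ≠ 0) :
    ∃ ps ws : ℕ → C3,
      Tendsto ps atTop (nhds (mk3 0 (y₀ : ℂ) 0)) ∧
      (∀ m : ℕ, F (ps m) ≠ 0 ∧ Surjective ⇑(fderiv ℝ F (ps m))) ∧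
      (∀ m : ℕ, ‖ws m‖ = 1 ∧ ∀ u : C3, fderiv ℝ F (ps m) u = 0 → realInnerC (ws m) u = 0) ∧
      Tendsto ws atTop (nhds (mk3 0 Complex.I 0)) := by
  set t : ℕ → ℝ := fun m => ((m : ℝ) + 1)⁻¹ with ht
  have htpos : ∀ m, 0 < t m := fun m => by positivity
  have htne : ∀ m, t m ≠ 0 := fun m => (htpos m).ne'
  refine ⟨fun m => mk3 ((t m : ℂ)) (y₀ : ℂ) 0, fun _ => mk3 0 Complex.I 0, ?_, ?_, ?_, ?_⟩
  · rw [tendsto_iff_dist_tendsto_zero]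
    have heq : (fun m => dist (mk3 ((t m : ℂ)) (y₀ : ℂ) 0) (mk3 0 (y₀ : ℂ) 0))
        = fun m => t m := by
      funext m
      rw [EuclideanSpace.dist_eq]
      simp [Fin.sum_univ_three, Complex.dist_eq, Real.sqrt_sq (htpos m).le,
        abs_of_pos (htpos m)]
    rw [heq, ht]
    simpa [one_div] using tendsto_one_div_add_atTop_nhds_zero_nat (𝕜 := ℝ)
  · intro m
    constructor
    · rw [hF]
      have hk0 : k ≠ 0 := by omega
      simp only [mk3_zero, mk3_one, mk3_two, zero_pow hk0, add_zero, Complex.conj_ofReal]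
      simp only [ne_eq, mul_eq_zero, Complex.ofReal_eq_zero, not_or]
      exact ⟨htne m, hy₀, htne m⟩
    · intro c
      refine ⟨mk3 0 (c / ((t m : ℝ) : ℂ)^2) 0, ?_⟩
      rw [key k hk F hF (t m) y₀]
      have : ((t m : ℝ) : ℂ) ≠ 0 := by exact_mod_cast htne m
      simp only [mk3_zero, mk3_one, map_zero, mul_zero, zero_add, add_zero]
      field_simp
  · intro m
    constructor
    · rw [EuclideanSpace.norm_eq]
      simp [Fin.sum_univ_three]
    · intro u hu
      rw [key k hk F hF (t m) y₀] at hu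
      have him := congrArg Complex.im hu
      have htm := htne m
      simp only [Complex.add_im, Complex.mul_im, Complex.ofReal_re, Complex.ofReal_im,
        Complex.conj_re, Complex.conj_im, Complex.zero_im, ← Complex.ofReal_pow] at him
      have hu1 : (u 1).im = 0 := by
        have h2 : (t m)^2 ≠ 0 := pow_ne_zero 2 htm
        have h3 : (t m)^2 * (u 1).im = 0 := by linarith
        exact (mul_eq_zero.mp h3).resolve_left h2
      unfold realInnerC
      simp [Fin.sum_univ_three, Complex.mul_re, hu1]
  · exact tendsto_const_nhds
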